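/- Let f : ℝ^d → ℝ^K be a multi-class classifier whose components f_i are each Lipschitz. Let c be such that f_c(x₀) > f_j(x₀) for all j ≠ c, and for each j ≠ c let L_j > 0 be a Lipschitz constant (in ℓp norm) of the function x ↦ f_c(x) - f_j(x). Then for all δ with ‖δ‖_p ≤ min_{j ≠ c} (f_c(x₀) - f_j(x₀))/L_j, we have f_c(x₀ + δ) ≥ f_j(x₀ + δ) for all j ≠ c; i.e., the prediction does not change. -/
import Mathlib
open scoped ENNReal

/-- formal guarantee on the robustness lower bound for untargeted attacks.
If the prediction at `x₀` is (uniquely) class `c` and for each `j ≠ c` the function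
`f · c - f · j` is Lipschitz with constant `L j > 0` in ℓp norm, then any perturbation
whose ℓp norm is at most `min_{j ≠ c} (f x₀ c - f x₀ j) / L j` cannot change the prediction. -/
theorem clever_untargeted_lower_bound {d K : ℕ} (hK : 2 ≤ K) {p : ℝ≥0∞} [Fact (1 ≤ p)]
    (f : PiLp p (fun _ : Fin d => ℝ) → Fin K → ℝ)
    (x₀ : PiLp p (fun _ : Fin d => ℝ)) (c : Fin K)
    (hc : ∀ j : Fin K, j ≠ c → f x₀ j < f x₀ c)
    (L : Fin K → ℝ) (hL : ∀ j : Fin K, j ≠ c → 0 < L j)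
    (hLip : ∀ j : Fin K, j ≠ c →
      ∀ x y : PiLp p (fun _ : Fin d => ℝ),
        |(f x c - f x j) - (f y c - f y j)| ≤ L j * ‖x - y‖) :
    ∀ δ : PiLp p (fun _ : Fin d => ℝ),
      (∀ j : Fin K, j ≠ c → ‖δ‖ ≤ (f x₀ c - f x₀ j) / L j) →
      ∀ j : Fin K, j ≠ c → f (x₀ + δ) j ≤ f (x₀ + δ) c := by
  intro δ hδ j hj
  have h1 := hLip j hj (x₀ + δ) x₀
  have h2 : ‖x₀ + δ - x₀‖ = ‖δ‖ := by simp
  rw [h2] at h1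
  have h3 : L j * ‖δ‖ ≤ f x₀ c - f x₀ j := by
    have := hδ j hj
    have hLj := hL j hj
    rw [le_div_iff₀ hLj] at this
    linarith [this]
  have := abs_le.1 h1
  linarith [this.1]
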